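/- If f : ℝᵈ → ℝ̄ (d ≥ 1) is a linear extended function that is not everywhere finite, then there exists a unit vector v₁ ∈ ℝᵈ such that f(x) = +∞ whenever v₁·x > 0 and f(x) = -∞ whenever v₁·x < 0. -/

import Mathlib

/-- A *linear extended function*: scaling and additivity whenever the sum is legal. -/
def IsLinExt {E : Type*} [AddCommGroup E] [Module ℝ E] (f : E → EReal) : Prop :=
  (∀ (α : ℝ) (x : E), f (α • x) = (α : EReal) * f x) ∧
  (∀ x x' : E, ¬ ((f x = ⊤ ∧ f x' = ⊥) ∨ (f x = ⊥ ∧ f x' = ⊤)) →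
    f (x + x') = f x + f x')

/-- An *affine extended function*: a horizontally and vertically shifted linear extended fn. -/
def IsAffExt {E : Type*} [AddCommGroup E] [Module ℝ E] (h : E → EReal) : Prop :=
  ∃ (f : E → EReal) (x₀ : E) (β : ℝ), IsLinExt f ∧ ∀ x, h x = f (x - x₀) + (β : EReal)

lemma aux_mul_ne_top {a : ℝ} (ha : 0 ≤ a) {t : EReal} (ht : t ≠ ⊤) :
    (a : EReal) * t ≠ ⊤ := by
  rcases ha.eq_or_lt with h | h
  · simp [← h]
  · induction t with
    | bot => simp [EReal.coe_mul_bot_of_pos h]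
    | coe r => rw [← EReal.coe_mul]; exact EReal.coe_ne_top _
    | top => exact absurd rfl ht

lemma aux_neg_one_mul_eq_top {t : EReal} (h : ((-1 : ℝ) : EReal) * t = ⊤) : t = ⊥ := by
  induction t with
  | bot => rfl
  | coe r => rw [← EReal.coe_mul] at h; exact absurd h (EReal.coe_ne_top _)
  | top => rw [EReal.coe_mul_top_of_neg (by norm_num)] at h; exact absurd h (by simp)

theorem stmt_6 (d : ℕ) (hd : 1 ≤ d) (f : EuclideanSpace ℝ (Fin d) → EReal)
    (hf : IsLinExt f) (hnotfin : ∃ x, f x = ⊤ ∨ f x = ⊥) :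
    ∃ v₁ : EuclideanSpace ℝ (Fin d), ‖v₁‖ = 1 ∧
      ∀ x, (0 < (inner ℝ v₁ x : ℝ) → f x = ⊤) ∧ ((inner ℝ v₁ x : ℝ) < 0 → f x = ⊥) := by
  classical
  -- f of a negation
  have hneg : ∀ x : EuclideanSpace ℝ (Fin d), f (-x) = ((-1 : ℝ) : EReal) * f x := by
    intro x
    have := hf.1 (-1) x
    simpa using this
  have hnegtop : ∀ x : EuclideanSpace ℝ (Fin d), f (-x) = ⊤ → f x = ⊥ := fun x hx =>
    aux_neg_one_mul_eq_top (by rw [← hneg x]; exact hx)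
  -- f 0 = 0
  have h0 : f 0 = 0 := by
    have := hf.1 0 (0 : EuclideanSpace ℝ (Fin d))
    simpa using this
  -- there is x₀ with f x₀ = ⊤
  obtain ⟨y₀, hy₀⟩ := hnotfin
  obtain ⟨x₀, hx₀⟩ : ∃ x₀ : EuclideanSpace ℝ (Fin d), f x₀ = ⊤ := by
    rcases hy₀ with h | h
    · exact ⟨y₀, h⟩
    · refine ⟨-y₀, ?_⟩
      rw [hneg, h, EReal.coe_mul_bot_of_neg (by norm_num)]
  -- the set where f is not ⊤
  set B : Set (EuclideanSpace ℝ (Fin d)) := {x | f x ≠ ⊤} with hB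
  have h0B : (0 : EuclideanSpace ℝ (Fin d)) ∈ B := by simp [hB, h0]
  have hsmulB : ∀ (a : ℝ), 0 ≤ a → ∀ x ∈ B, a • x ∈ B := by
    intro a ha x hx
    simp only [hB, Set.mem_setOf_eq] at hx ⊢
    rw [hf.1 a x]
    exact aux_mul_ne_top ha hx
  have haddB : ∀ x ∈ B, ∀ y ∈ B, x + y ∈ B := by
    intro x hx y hy
    simp only [hB, Set.mem_setOf_eq] at hx hy ⊢
    rw [hf.2 x y (by tauto)]
    exact (EReal.add_lt_top hx hy).ne
  have hconvB : Convex ℝ B := by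
    intro x hx y hy a b ha hb hab
    exact haddB _ (hsmulB a ha x hx) _ (hsmulB b hb y hy)
  have hx₀B : x₀ ∉ B := by simp [hB, hx₀]
  -- closure B ≠ univ
  have hclos : closure B ≠ Set.univ := by
    intro hcl
    have hspan : affineSpan ℝ B = ⊤ := by
      have hclosed : IsClosed ((affineSpan ℝ B :
          AffineSubspace ℝ (EuclideanSpace ℝ (Fin d))) : Set (EuclideanSpace ℝ (Fin d))) :=
        (affineSpan ℝ B).closed_of_finiteDimensional
      have hsub : closure B ⊆ (affineSpan ℝ B : Set (EuclideanSpace ℝ (Fin d))) :=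
        closure_minimal (subset_affineSpan ℝ B) hclosed
      rw [hcl] at hsub
      rw [eq_top_iff]
      intro x _
      exact hsub (Set.mem_univ x)
    obtain ⟨z, hz⟩ := (hconvB.interior_nonempty_iff_affineSpan_eq_top).2 hspan
    apply hx₀B
    have hq : (z + (2 : ℝ) • (x₀ - z)) ∈ closure B := by rw [hcl]; trivial
    have hmem : x₀ ∈ openSegment ℝ z (z + (2 : ℝ) • (x₀ - z)) := by
      refine ⟨1/2, 1/2, by norm_num, by norm_num, by norm_num, ?_⟩
      module
    exact interior_subset
      (hconvB.openSegment_interior_closure_subset_interior hz hq hmem)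
  -- pick p ∉ closure B and separate
  obtain ⟨p, hp⟩ : ∃ p : EuclideanSpace ℝ (Fin d), p ∉ closure B := by
    by_contra h
    push_neg at h
    exact hclos (Set.eq_univ_of_forall h)
  obtain ⟨L, u, hLB, hLp⟩ :=
    geometric_hahn_banach_closed_point (hconvB.closure) isClosed_closure hp
  have hu : 0 < u := by
    have := hLB 0 (subset_closure h0B)
    simpa using this
  -- B ⊆ {x | L x ≤ 0}
  have hBle : ∀ x ∈ B, L x ≤ 0 := by
    intro x hx
    by_contra h
    push_neg at h
    set t : ℝ := (u + 1) / L x with ht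
    have htpos : 0 < t := div_pos (by linarith) h
    have := hLB (t • x) (subset_closure (hsmulB t htpos.le x hx))
    rw [map_smul, smul_eq_mul, ht, div_mul_cancel₀ _ (ne_of_gt h)] at this
    linarith
  -- the representing vector
  set v : EuclideanSpace ℝ (Fin d) :=
    (InnerProductSpace.toDual ℝ (EuclideanSpace ℝ (Fin d))).symm L with hv
  have hvinner : ∀ x : EuclideanSpace ℝ (Fin d), (inner ℝ v x : ℝ) = L x := fun x =>
    InnerProductSpace.toDual_symm_apply
  have hvne : v ≠ 0 := by
    intro h
    have : L p = 0 := by rw [← hvinner p, h, inner_zero_left]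
    linarith
  have hnv : (0 : ℝ) < ‖v‖ := norm_pos_iff.2 hvne
  refine ⟨‖v‖⁻¹ • v, ?_, ?_⟩
  · rw [norm_smul, norm_inv, norm_norm, inv_mul_cancel₀ (norm_ne_zero_iff.2 hvne)]
  · intro x
    have hkey : ∀ y : EuclideanSpace ℝ (Fin d),
        0 < (inner ℝ ((‖v‖⁻¹ : ℝ) • v) y : ℝ) → f y = ⊤ := by
      intro y hy
      rw [real_inner_smul_left] at hy
      have hLy : 0 < L y := by
        rw [← hvinner y]
        nlinarith [inv_pos.2 hnv, hvinner y]
      by_contra h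
      have := hBle y h
      rw [← hvinner y] at hLy
      rw [← hvinner y] at this
      linarith
    constructor
    · exact hkey x
    · intro hx
      apply hnegtop
      apply hkey (-x)
      rw [inner_neg_right]
      linarith
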